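/- For every integer n with |n| ≥ 2 and every element x of the free group F(a,b), the reduced (normal form) word representing x*(a*b)^n*x⁻¹ contains the string 'abab' or the string 'baba' (when n ≥ 2), or their inverse strings 'b⁻¹a⁻¹b⁻¹a⁻¹' or 'a⁻¹b⁻¹a⁻¹b⁻¹' (when n ≤ -2), as a contiguous substring. -/

import Mathlib

noncomputable def a : FreeGroup Bool := FreeGroup.of false
noncomputable def b : FreeGroup Bool := FreeGroup.of true

/-- Letters of reduced words: `(false, true)` is `a`, `(false, false)` is `a⁻¹`,
`(true, true)` is `b`, `(true, false)` is `b⁻¹`. -/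
def strABAB : List (Bool × Bool) := [(false, true), (true, true), (false, true), (true, true)]
def strBABA : List (Bool × Bool) := [(true, true), (false, true), (true, true), (false, true)]
def strBiAiBiAi : List (Bool × Bool) :=
  [(true, false), (false, false), (true, false), (false, false)]
def strAiBiAiBi : List (Bool × Bool) :=
  [(false, false), (true, false), (false, false), (true, false)]

namespace ConjAux

/-- The "no cancellation" relation between adjacent letters. -/
def Rd (p q : Bool × Bool) : Prop := ¬(p.1 = q.1 ∧ p.2 = !q.2)

lemma reduce_eq_self {L : List (Bool × Bool)} (h : List.Chain' Rd L) :
    FreeGroup.reduce L = L := by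
  induction L with
  | nil => rfl
  | cons x L ih =>
    have hL := ih h.tail
    rw [FreeGroup.reduce.cons, hL]
    cases L with
    | nil => rfl
    | cons hd tl =>
      have hr : Rd x hd := (List.isChain_cons_cons.mp h).1
      simp only [Rd] at hr
      simp only [if_neg hr]

lemma exists_of_not_chain : ∀ {R : List (Bool × Bool)}, ¬ List.Chain' Rd R →
    ∃ (l1 : List (Bool × Bool)) (x bb : Bool) (l2 : List (Bool × Bool)),
      R = l1 ++ (x, bb) :: (x, !bb) :: l2 := by
  intro R
  induction R with
  | nil => intro h; exact absurd List.isChain_nil h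
  | cons p R ih =>
    intro h
    cases R with
    | nil => exact absurd (List.isChain_singleton p) h
    | cons q R2 =>
      by_cases hpq : Rd p q
      · have h2 : ¬ List.Chain' Rd (q :: R2) := by
          intro hc; exact h (List.isChain_cons_cons.mpr ⟨hpq, hc⟩)
        obtain ⟨l1, xx, bb, l2, e⟩ := ih h2
        exact ⟨p :: l1, xx, bb, l2, by rw [e]; rfl⟩
      · simp only [Rd, not_not] at hpq
        obtain ⟨p1, p2⟩ := p
        obtain ⟨q1, q2⟩ := q
        simp only at hpq
        refine ⟨[], p1, p2, R2, ?_⟩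
        rw [hpq.1, hpq.2]
        simp

lemma chain_toWord (x : FreeGroup Bool) : List.Chain' Rd x.toWord := by
  by_contra h
  obtain ⟨l1, xx, bb, l2, e⟩ := exists_of_not_chain h
  exact FreeGroup.reduce.not (L₁ := x.toWord) (by rw [FreeGroup.reduce_toWord]; exact e)

lemma chain_invRev {L : List (Bool × Bool)} (h : List.Chain' Rd L) :
    List.Chain' Rd (FreeGroup.invRev L) := by
  rw [FreeGroup.invRev, List.Chain', List.isChain_reverse]
  apply List.isChain_map_of_isChain _ _ h
  intro p q hpq
  simp only [flip, Rd] at *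
  rintro ⟨h1, h2⟩
  simp only [Bool.not_not] at h2
  exact hpq ⟨h1.symm, by simp [← h2]⟩

/-- The alternating word of length `k` starting with letter `(s, true)`. -/
def altw : ℕ → Bool → List (Bool × Bool)
  | 0, _ => []
  | k + 1, s => (s, true) :: altw k (!s)

lemma altw_cons2 (k : ℕ) (s : Bool) :
    altw (k + 2) s = (s, true) :: (!s, true) :: altw k s := by
  simp [altw]

lemma altw_chain (k : ℕ) : ∀ s, List.Chain' Rd (altw k s) := by
  induction k with
  | zero => intro s; exact List.isChain_nil
  | succ k ih =>
    intro s
    cases k with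
    | zero => exact List.isChain_singleton _
    | succ m =>
      have h2 := ih (!s)
      rw [show altw (m + 1 + 1) s = (s, true) :: altw (m + 1) (!s) from rfl]
      refine List.isChain_cons.mpr ⟨?_, h2⟩
      intro y hy
      rw [show altw (m + 1) (!s) = (!s, true) :: altw m (!(!s)) from rfl] at hy
      simp only [List.head?_cons, Option.mem_def, Option.some.injEq] at hy
      subst hy
      simp [Rd]

lemma altw_two_step (m : ℕ) : ∀ s, altw (2 * m + 2) s = altw (2 * m) s ++ [(s, true), (!s, true)] := by
  induction m with
  | zero => intro s; rfl
  | succ m ih =>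
    intro s
    rw [show 2 * (m + 1) + 2 = (2 * m + 2) + 2 by ring, altw_cons2, ih s,
      show 2 * (m + 1) = 2 * m + 2 by ring, altw_cons2]
    simp

lemma altw_getLast (k : ℕ) (s : Bool) :
    (altw (2 * k + 2) s).getLast? = some (!s, true) := by
  rw [altw_two_step, show altw (2 * k) s ++ [(s, true), (!s, true)]
      = (altw (2 * k) s ++ [(s, true)]) ++ [(!s, true)] by simp, List.getLast?_concat]

/-- `c false = a*b`, `c true = b*a`. -/
noncomputable def c (s : Bool) : FreeGroup Bool := FreeGroup.mk (altw 2 s)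

lemma c_false : c false = a * b := by
  rw [c, a, b, FreeGroup.of, FreeGroup.of, FreeGroup.mul_mk]; rfl

lemma c_true : c true = b * a := by
  rw [c, a, b, FreeGroup.of, FreeGroup.of, FreeGroup.mul_mk]; rfl

lemma c_pow (m : ℕ) (s : Bool) : c s ^ m = FreeGroup.mk (altw (2 * m) s) := by
  induction m with
  | zero => rw [pow_zero, show altw (2 * 0) s = [] from rfl, FreeGroup.one_eq_mk]
  | succ m ih =>
    rw [pow_succ', ih, c, FreeGroup.mul_mk,
      show 2 * (m + 1) = 2 * m + 2 by ring, altw_cons2]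
    simp [altw]

lemma conj1 (s : Bool) : (FreeGroup.of s)⁻¹ * c s * FreeGroup.of s = c (!s) := by
  cases s <;> simp only [c_false, c_true, Bool.not_false, Bool.not_true, a, b] <;> group

lemma conj2 (s : Bool) : FreeGroup.of (!s) * c s * (FreeGroup.of (!s))⁻¹ = c (!s) := by
  cases s <;> simp only [c_false, c_true, Bool.not_false, Bool.not_true, a, b] <;> group

lemma mk_single_true (u : Bool) : FreeGroup.mk [(u, true)] = FreeGroup.of u := rfl

lemma mk_single_false (u : Bool) : FreeGroup.mk [(u, false)] = (FreeGroup.of u)⁻¹ := by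
  rw [FreeGroup.of, FreeGroup.inv_mk]; rfl

lemma base_infix (s : Bool) (k : ℕ) :
    strABAB <:+: altw (2 * (2 + k)) s ∨ strBABA <:+: altw (2 * (2 + k)) s := by
  have h4 : altw (2 * (2 + k)) s
      = [(s, true), (!s, true), (s, true), (!s, true)] ++ altw (2 * k) s := by
    rw [show 2 * (2 + k) = (2 * k + 2) + 2 by ring, altw_cons2, altw_cons2]
    simp
  cases s
  · exact Or.inl ⟨[], altw (2 * k) false, by rw [h4]; rfl⟩
  · exact Or.inr ⟨[], altw (2 * k) true, by rw [h4]; rfl⟩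

lemma main : ∀ (N : ℕ) (x : FreeGroup Bool), x.toWord.length ≤ N →
    ∀ (s : Bool) (m : ℕ), 2 ≤ m →
    strABAB <:+: (x * c s ^ m * x⁻¹).toWord ∨
      strBABA <:+: (x * c s ^ m * x⁻¹).toWord := by
  have base : ∀ (s : Bool) (m : ℕ), 2 ≤ m →
      strABAB <:+: (c s ^ m).toWord ∨ strBABA <:+: (c s ^ m).toWord := by
    intro s m hm
    obtain ⟨k, rfl⟩ := Nat.exists_eq_add_of_le hm
    rw [c_pow, FreeGroup.toWord_mk, reduce_eq_self (altw_chain _ _)]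
    exact base_infix s k
  intro N
  induction N with
  | zero =>
    intro x hx s m hm
    have hx1 : x = 1 := by
      have h0 : x.toWord = [] := List.length_eq_zero_iff.mp (Nat.le_zero.mp hx)
      rw [← FreeGroup.mk_toWord (x := x), h0, ← FreeGroup.one_eq_mk]
    rw [hx1]
    simpa using base s m hm
  | succ N ih =>
    intro x hx s m hm
    rcases List.eq_nil_or_concat x.toWord with h0 | ⟨M, ℓ, hL⟩
    · have hx1 : x = 1 := by
        rw [← FreeGroup.mk_toWord (x := x), h0, ← FreeGroup.one_eq_mk]
      rw [hx1]
      simpa using base s m hm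
    · rw [List.concat_eq_append] at hL
      have hchain : List.Chain' Rd (M ++ [ℓ]) := hL ▸ chain_toWord x
      have hMchain : List.Chain' Rd M := (List.isChain_append.mp hchain).1
      have hyW : (FreeGroup.mk M).toWord = M := by
        rw [FreeGroup.toWord_mk, reduce_eq_self hMchain]
      have hylen : (FreeGroup.mk M).toWord.length ≤ N := by
        rw [hyW]
        have := hx
        rw [hL, List.length_append] at this
        simpa using this
      have hxeq : x = FreeGroup.mk M * FreeGroup.mk [ℓ] := by
        rw [FreeGroup.mul_mk, ← hL, FreeGroup.mk_toWord]
      by_cases hc1 : ℓ = (s, false)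
      · -- cancellation with the first letter
        have hstep : (FreeGroup.of s)⁻¹ * c s ^ m * ((FreeGroup.of s)⁻¹)⁻¹ = c (!s) ^ m := by
          rw [← conj_pow, inv_inv, conj1]
        have key : x * c s ^ m * x⁻¹
            = FreeGroup.mk M * c (!s) ^ m * (FreeGroup.mk M)⁻¹ := by
          rw [hxeq, hc1, mk_single_false, ← hstep]
          group
        rw [key]
        exact ih (FreeGroup.mk M) hylen (!s) m hm
      · by_cases hc2 : ℓ = (!s, true)
        · -- cancellation with the last letter
          have hstep : FreeGroup.of (!s) * c s ^ m * (FreeGroup.of (!s))⁻¹ = c (!s) ^ m := by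
            rw [← conj_pow, conj2]
          have key : x * c s ^ m * x⁻¹
              = FreeGroup.mk M * c (!s) ^ m * (FreeGroup.mk M)⁻¹ := by
            rw [hxeq, hc2, mk_single_true, ← hstep]
            group
          rw [key]
          exact ih (FreeGroup.mk M) hylen (!s) m hm
        · -- no cancellation: the concatenation is already reduced
          obtain ⟨k, rfl⟩ := Nat.exists_eq_add_of_le hm
          set W := altw (2 * (2 + k)) s with hW
          have hWhead : W = (s, true) :: altw (2 * (2 + k) - 1) (!s) := by
            rw [hW, show 2 * (2 + k) = (2 * (2 + k) - 1) + 1 by omega]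
            rfl
          have hWlast : W.getLast? = some (!s, true) := by
            rw [hW, show 2 * (2 + k) = 2 * (1 + k) + 2 by ring]
            exact altw_getLast (1 + k) s
          have hinv : FreeGroup.invRev (M ++ [ℓ]) = (ℓ.1, !ℓ.2) :: FreeGroup.invRev M := by
            simp [FreeGroup.invRev]
          have hbig : List.Chain' Rd ((M ++ [ℓ]) ++ (W ++ FreeGroup.invRev (M ++ [ℓ]))) := by
            refine List.isChain_append.mpr ⟨hchain, ?_, ?_⟩
            · refine List.isChain_append.mpr ⟨altw_chain _ _, chain_invRev hchain, ?_⟩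
              intro p hp q hq
              rw [hWlast] at hp
              rw [hinv] at hq
              simp only [Option.mem_def, Option.some.injEq, List.head?_cons] at hp hq
              subst hp; subst hq
              simp only [Rd, Bool.not_not]
              rintro ⟨h1, h2⟩
              exact hc2 (Prod.ext h1.symm h2.symm)
            · intro p hp q hq
              rw [List.getLast?_concat] at hp
              rw [hWhead, List.cons_append] at hq
              simp only [Option.mem_def, Option.some.injEq, List.head?_cons] at hp hq
              subst hp
              subst hq
              simp only [Rd, Bool.not_true]
              rintro ⟨h1, h2⟩
              exact hc1 (Prod.ext h1 h2)
          have key : (x * c s ^ (2 + k) * x⁻¹).toWord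
              = (M ++ [ℓ]) ++ (W ++ FreeGroup.invRev (M ++ [ℓ])) := by
            rw [show x = FreeGroup.mk (M ++ [ℓ]) by rw [← hL, FreeGroup.mk_toWord],
              c_pow, FreeGroup.inv_mk, FreeGroup.mul_mk, FreeGroup.mul_mk,
              FreeGroup.toWord_mk, List.append_assoc]
            exact reduce_eq_self hbig
          rw [key]
          have hmid : W <:+: (M ++ [ℓ]) ++ (W ++ FreeGroup.invRev (M ++ [ℓ])) :=
            ⟨M ++ [ℓ], FreeGroup.invRev (M ++ [ℓ]), by simp⟩
          rcases base_infix s k with h | h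
          · exact Or.inl (h.trans hmid)
          · exact Or.inr (h.trans hmid)

lemma invRev_append (l1 l2 : List (Bool × Bool)) :
    FreeGroup.invRev (l1 ++ l2) = FreeGroup.invRev l2 ++ FreeGroup.invRev l1 := by
  simp [FreeGroup.invRev]

lemma infix_invRev {l1 l2 : List (Bool × Bool)} (h : l1 <:+: l2) :
    FreeGroup.invRev l1 <:+: FreeGroup.invRev l2 := by
  obtain ⟨u, v, rfl⟩ := h
  exact ⟨FreeGroup.invRev v, FreeGroup.invRev u, by simp [invRev_append]⟩

end ConjAux

/-- For `|n| ≥ 2`, the reduced word of `x * (a*b)^n * x⁻¹` contains `abab` or `baba`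
as a contiguous substring when `n ≥ 2`, and contains `b⁻¹a⁻¹b⁻¹a⁻¹` or `a⁻¹b⁻¹a⁻¹b⁻¹`
when `n ≤ -2`. -/
theorem conj_pow_contains_string (n : ℤ) (hn : 2 ≤ |n|) (x : FreeGroup Bool) :
    (2 ≤ n →
      strABAB <:+: (x * (a * b) ^ n * x⁻¹).toWord ∨
      strBABA <:+: (x * (a * b) ^ n * x⁻¹).toWord) ∧
    (n ≤ -2 →
      strBiAiBiAi <:+: (x * (a * b) ^ n * x⁻¹).toWord ∨
      strAiBiAiBi <:+: (x * (a * b) ^ n * x⁻¹).toWord) := by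
  constructor
  · intro h2
    have hmn : n = ((n.toNat : ℕ) : ℤ) := (Int.toNat_of_nonneg (by omega)).symm
    rw [hmn, zpow_natCast, ← ConjAux.c_false]
    exact ConjAux.main _ x le_rfl false n.toNat (by omega)
  · intro h2
    set m : ℕ := (-n).toNat with hm
    have hmn : n = -((m : ℕ) : ℤ) := by omega
    have key : x * (a * b) ^ n * x⁻¹ = (x * (a * b) ^ (m : ℕ) * x⁻¹)⁻¹ := by
      rw [hmn, zpow_neg, zpow_natCast]
      group
    rw [key, FreeGroup.toWord_inv]
    have hmain := ConjAux.main _ x le_rfl false m (by omega)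
    rw [ConjAux.c_false] at hmain
    rcases hmain with h | h
    · exact Or.inl (by
        have := ConjAux.infix_invRev h
        rwa [show FreeGroup.invRev strABAB = strBiAiBiAi from rfl] at this)
    · exact Or.inr (by
        have := ConjAux.infix_invRev h
        rwa [show FreeGroup.invRev strBABA = strAiBiAiBi from rfl] at this)
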